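/- arXiv:1901.02922 — 3 statements merged into one kernel-verified Lean document; each statement's English description precedes it below -/
import Mathlib

section
/- Let G = ℤ^m × F_n and let H ≤ G be a finitely generated subgroup with projection Hπ of rank at most 1 (i.e., Hπ is trivial or cyclic). Then H is inert in G: for every subgroup K ≤ G, r(H ∩ K) ≤ r(K). In particular di_G(H) = 1. -/
noncomputable section

def grank {G : Type*} [Group G] (H : Subgroup G) : ℕ∞ :=
  ⨅ (S : Set G) (_ : Subgroup.closure S = H), S.encard

def rrank {G : Type*} [Group G] (H : Subgroup G) : ℕ∞ := grank H - 1

def erat (a b : ℕ∞) : ENNReal := if a = 0 ∧ b = 0 then 1 else (a : ENNReal) / (b : ENNReal)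

def dc {G : Type*} [Group G] (H : Subgroup G) : ENNReal :=
  ⨆ (K : Subgroup G) (_ : K.FG ∧ H ≤ K), erat (rrank H) (rrank K)

def di {G : Type*} [Group G] (H : Subgroup G) : ENNReal :=
  ⨆ (K : Subgroup G) (_ : K.FG ∧ (H ⊓ K).FG), erat (rrank (H ⊓ K)) (rrank K)

namespace InertAux

open Subgroup Set

variable {G : Type*} [Group G] {G' : Type*} [Group G']

lemma grank_le {H : Subgroup G} {S : Set G} (h : Subgroup.closure S = H) :
    grank H ≤ S.encard := iInf₂_le S h

lemma exists_grank (H : Subgroup G) :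
    ∃ S : Set G, Subgroup.closure S = H ∧ S.encard = grank H := by
  by_cases htop : grank H = ⊤
  · exact ⟨(H : Set G), Subgroup.closure_eq H,
      le_antisymm (htop ▸ le_top) (htop ▸ grank_le (Subgroup.closure_eq H))⟩
  · have h2 : grank H < grank H + 1 := by
      obtain ⟨k, hk⟩ := WithTop.ne_top_iff_exists.mp htop
      rw [← hk]
      exact_mod_cast ENat.lt_add_one_iff (by exact_mod_cast WithTop.coe_ne_top) |>.mpr le_rfl
    conv at h2 => lhs; rw [grank]
    obtain ⟨S, hS⟩ := iInf_lt_iff.mp h2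
    obtain ⟨hSc, hlt⟩ := iInf_lt_iff.mp hS
    refine ⟨S, hSc, le_antisymm ?_ (grank_le hSc)⟩
    have := Order.le_of_lt_add_one hlt
    exact this

lemma grank_map_le (f : G →* G') (H : Subgroup G) : grank (H.map f) ≤ grank H := by
  obtain ⟨S, hS, hcard⟩ := exists_grank H
  calc grank (H.map f) ≤ (f '' S).encard :=
        grank_le (by rw [← MonoidHom.map_closure, hS])
    _ ≤ S.encard := Set.encard_image_le f S
    _ = grank H := hcard

lemma grank_top_le (K : Subgroup G) : grank (⊤ : Subgroup ↥K) ≤ grank K := by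
  obtain ⟨S, hS, hcard⟩ := exists_grank K
  subst hS
  refine le_trans (grank_le (Subgroup.closure_preimage_eq_top S)) ?_
  rw [← hcard]
  rw [Set.encard_preimage_of_injective_subset_range (Subgroup.subtype_injective _)
    (by simp)]

section Abelian

variable {V : Type*} [AddCommGroup V]

def sm (B : Subgroup (Multiplicative V)) : Submodule ℤ V :=
  AddSubgroup.toIntSubmodule (Subgroup.toAddSubgroup' B)

lemma mem_sm {B : Subgroup (Multiplicative V)} {x : V} :
    x ∈ sm B ↔ Multiplicative.ofAdd x ∈ B := Iff.rfl

lemma mem_toAddSubgroup' {B : Subgroup (Multiplicative V)} {x : V} :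
    x ∈ Subgroup.toAddSubgroup' B ↔ Multiplicative.ofAdd x ∈ B := Iff.rfl

lemma mem_toSubgroup {X : AddSubgroup V} {x : Multiplicative V} :
    x ∈ AddSubgroup.toSubgroup X ↔ Multiplicative.toAdd x ∈ X := Iff.rfl

lemma sm_mono {B C : Subgroup (Multiplicative V)} (h : B ≤ C) : sm B ≤ sm C :=
  fun _ hx => h hx

lemma toAddSubgroup'_closure (S : Set (Multiplicative V)) :
    Subgroup.toAddSubgroup' (Subgroup.closure S) =
      AddSubgroup.closure (Multiplicative.toAdd '' S) := by
  apply le_antisymm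
  · have : Subgroup.closure S ≤
        AddSubgroup.toSubgroup (AddSubgroup.closure (Multiplicative.toAdd '' S)) := by
      rw [Subgroup.closure_le]
      intro s hs
      exact mem_toSubgroup.mpr (AddSubgroup.subset_closure (Set.mem_image_of_mem _ hs))
    intro x hx
    exact mem_toSubgroup.mp (this (mem_toAddSubgroup'.mp hx))
  · rw [AddSubgroup.closure_le]
    rintro x ⟨s, hs, rfl⟩
    exact mem_toAddSubgroup'.mpr (Subgroup.subset_closure hs)

lemma sm_closure (S : Set (Multiplicative V)) :
    sm (Subgroup.closure S) = Submodule.span ℤ (Multiplicative.toAdd '' S) := by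
  rw [sm, toAddSubgroup'_closure, ← Submodule.span_int_eq_addSubgroupClosure]
  exact AddSubgroup.toIntSubmodule.apply_symm_apply _

lemma finrank_sm_le (B : Subgroup (Multiplicative V)) :
    (Module.finrank ℤ (sm B) : ℕ∞) ≤ grank B := by
  by_cases htop : grank B = ⊤
  · rw [htop]; exact le_top
  obtain ⟨S, hS, hcard⟩ := InertAux.exists_grank B
  have hfin : S.Finite := by
    rw [← Set.encard_ne_top_iff, hcard]; exact htop
  subst hS
  rw [sm_closure]
  have hfin' : (Multiplicative.toAdd '' S).Finite := hfin.image _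
  haveI := hfin'.fintype
  calc (Module.finrank ℤ (Submodule.span ℤ (Multiplicative.toAdd '' S)) : ℕ∞)
      ≤ ((Multiplicative.toAdd '' S).toFinset.card : ℕ∞) := by
        exact_mod_cast finrank_span_le_card _
    _ = (Multiplicative.toAdd '' S).encard := (Set.encard_eq_coe_toFinset_card _).symm
    _ ≤ S.encard := Set.encard_image_le _ _
    _ = _ := hcard

lemma grank_le_finrank_sm (B : Subgroup (Multiplicative V))
    [Module.Free ℤ (sm B)] [Module.Finite ℤ (sm B)] :
    grank B ≤ (Module.finrank ℤ (sm B) : ℕ∞) := by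
  let b := Module.Free.chooseBasis ℤ (sm B)
  have hclosure :
      Subgroup.closure (Set.range fun i => Multiplicative.ofAdd ((b i : V))) = B := by
    have h1 : sm (Subgroup.closure (Set.range fun i => Multiplicative.ofAdd ((b i : V))))
        = sm B := by
      rw [sm_closure]
      have himg : Multiplicative.toAdd '' (Set.range fun i => Multiplicative.ofAdd ((b i : V)))
          = Set.range (fun i => ((b i : V))) := by
        rw [← Set.range_comp]; rfl
      rw [himg]
      calc Submodule.span ℤ (Set.range fun i => ((b i : V)))
          = Submodule.map (sm B).subtype (Submodule.span ℤ (Set.range ⇑b)) := by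
            rw [Submodule.map_span, ← Set.range_comp]; rfl
        _ = sm B := by rw [b.span_eq, Submodule.map_subtype_top]
    have := congrArg (fun q => (AddSubgroup.toIntSubmodule.symm q : AddSubgroup V)) h1
    simp only [sm, OrderIso.symm_apply_apply] at this
    exact Subgroup.toAddSubgroup'.injective this
  calc grank B ≤ (Set.range fun i => Multiplicative.ofAdd ((b i : V))).encard :=
        InertAux.grank_le hclosure
    _ ≤ (Set.univ : Set (Module.Free.ChooseBasisIndex ℤ (sm B))).encard := by
        rw [← Set.image_univ]; exact Set.encard_image_le _ _
    _ = (Fintype.card (Module.Free.ChooseBasisIndex ℤ (sm B)) : ℕ∞) := by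
        rw [Set.encard_univ]; exact_mod_cast ENat.card_eq_coe_fintype_card
    _ = (Module.finrank ℤ (sm B) : ℕ∞) := by
        rw [Module.finrank_eq_card_chooseBasisIndex]

end Abelian

lemma isCyclic_zpowers' {G : Type*} [Group G] (u : G) : IsCyclic ↥(Subgroup.zpowers u) := by
  refine ⟨⟨⟨u, Subgroup.mem_zpowers u⟩, fun x => ?_⟩⟩
  obtain ⟨k, hk⟩ := x.2
  exact ⟨k, Subtype.ext (by simpa using hk)⟩

lemma map_inl_map_fst {M N : Type*} [Group M] [Group N] (B : Subgroup (M × N))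
    (hB : B ≤ (MonoidHom.snd M N).ker) :
    ((B.map (MonoidHom.fst M N)).map (MonoidHom.inl M N)) = B := by
  ext x
  constructor
  · rintro ⟨v, ⟨b, hb, rfl⟩, rfl⟩
    have hb2 : b.2 = 1 := hB hb
    have : (MonoidHom.inl M N) ((MonoidHom.fst M N) b) = b := by
      ext
      · rfl
      · exact hb2.symm
    rwa [this]
  · intro hx
    refine ⟨x.1, ⟨x, hx, rfl⟩, ?_⟩
    have hx2 : x.2 = 1 := hB hx
    ext
    · rfl
    · exact hx2.symm

lemma grank_le_map_fst {M N : Type*} [Group M] [Group N] (B : Subgroup (M × N))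
    (hB : B ≤ (MonoidHom.snd M N).ker) :
    grank B ≤ grank (B.map (MonoidHom.fst M N)) := by
  conv_lhs => rw [← map_inl_map_fst B hB]
  exact grank_map_le _ _

lemma grank_le_inf_ker_add_one {G N : Type*} [Group G] [Group N] (J : Subgroup G)
    (f : G →* N) (x0 : G) (hx0 : x0 ∈ J) (hgen : ∀ j ∈ J, ∃ t : ℤ, f j = (f x0) ^ t) :
    grank J ≤ grank (J ⊓ f.ker) + 1 := by
  obtain ⟨T, hT, hTcard⟩ := exists_grank (J ⊓ f.ker)
  have hsub : J ⊓ f.ker ≤ Subgroup.closure (T ∪ {x0}) := by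
    rw [← hT]
    exact Subgroup.closure_mono Set.subset_union_left
  have hTJ : T ⊆ (J : Set G) := by
    intro x hx
    have : x ∈ J ⊓ f.ker := hT ▸ Subgroup.subset_closure hx
    exact this.1
  have hclosure : Subgroup.closure (T ∪ {x0}) = J := by
    apply le_antisymm
    · rw [Subgroup.closure_le]
      rintro x (hx | hx)
      · exact hTJ hx
      · rw [Set.mem_singleton_iff] at hx
        rw [hx]; exact hx0
    · intro j hj
      obtain ⟨t, ht⟩ := hgen j hj
      have hmem : j * x0 ^ (-t) ∈ J ⊓ f.ker := by
        refine ⟨mul_mem hj (zpow_mem hx0 _), ?_⟩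
        have h9 : f (j * x0 ^ (-t)) = 1 := by
          rw [map_mul, map_zpow, ht, ← zpow_add, add_neg_cancel, zpow_zero]
        exact h9
      have h1 : j * x0 ^ (-t) ∈ Subgroup.closure (T ∪ {x0}) := hsub hmem
      have hx0mem : x0 ∈ Subgroup.closure (T ∪ {x0}) :=
        Subgroup.subset_closure (Set.mem_union_right T (Set.mem_singleton x0))
      have h2 : x0 ^ t ∈ Subgroup.closure (T ∪ {x0}) := zpow_mem hx0mem t
      have heq : (j * x0 ^ (-t)) * x0 ^ t = j := by
        rw [mul_assoc, ← zpow_add, neg_add_cancel, zpow_zero, mul_one]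
      rw [← heq]
      exact mul_mem h1 h2
  calc grank J ≤ (T ∪ {x0}).encard := grank_le hclosure
    _ ≤ T.encard + ({x0} : Set G).encard := Set.encard_union_le _ _
    _ = grank (J ⊓ f.ker) + 1 := by rw [hTcard, Set.encard_singleton]


lemma finrank_prod_top {V : Type*} [AddCommGroup V] [Module ℤ V]
    (p : Submodule ℤ V) [Module.Free ℤ p] [Module.Finite ℤ p] :
    Module.finrank ℤ (p.prod (⊤ : Submodule ℤ ℤ)) = Module.finrank ℤ p + 1 := by
  let e : ↥(p.prod (⊤ : Submodule ℤ ℤ)) ≃ₗ[ℤ] ↥p × ℤ :=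
    { toFun := fun x => (⟨x.1.1, x.2.1⟩, x.1.2)
      map_add' := fun x y => rfl
      map_smul' := fun c x => rfl
      invFun := fun y => ⟨(y.1.1, y.2), ⟨y.1.2, trivial⟩⟩
      left_inv := fun x => rfl
      right_inv := fun y => rfl }
  rw [e.finrank_eq, Module.finrank_prod, Module.finrank_self]

section Main

variable {m n : ℕ}

local notation "Gmn" => Multiplicative (Fin m → ℤ) × FreeGroup (Fin n)

lemma main_ineq (J K : Subgroup (Multiplicative (Fin m → ℤ) × FreeGroup (Fin n)))
    (hJK : J ≤ K) (u : FreeGroup (Fin n))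
    (hJu : J.map (MonoidHom.snd (Multiplicative (Fin m → ℤ)) (FreeGroup (Fin n)))
      ≤ Subgroup.closure {u}) :
    grank J ≤ grank K := by
  set π := MonoidHom.snd (Multiplicative (Fin m → ℤ)) (FreeGroup (Fin n)) with hπdef
  set fstH := MonoidHom.fst (Multiplicative (Fin m → ℤ)) (FreeGroup (Fin n)) with hfstdef
  -- generator of J.map π
  haveI hcyc1 : IsCyclic ↥(Subgroup.closure {u} : Subgroup (FreeGroup (Fin n))) := by
    rw [← Subgroup.zpowers_eq_closure]
    exact isCyclic_zpowers' u
  haveI hcyc2 : IsCyclic ↥(J.map π) := Subgroup.isCyclic_of_le hJu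
  obtain ⟨g, hg⟩ := hcyc2.exists_generator
  obtain ⟨x0, hx0J, hx0⟩ := Subgroup.mem_map.mp g.2
  have hgen : ∀ j ∈ J, ∃ t : ℤ, π j = (π x0) ^ t := by
    intro j hj
    obtain ⟨t, ht⟩ := hg ⟨π j, Subgroup.mem_map_of_mem π hj⟩
    refine ⟨t, ?_⟩
    have := congrArg (Subtype.val) ht
    rw [SubgroupClass.coe_zpow] at this
    rw [hx0]
    exact (this : (g:FreeGroup (Fin n)) ^ t = π j).symm
  by_cases hKtriv : K.map π = ⊥
  · -- K is contained in the kernel of π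
    have hK' : K ≤ π.ker := (Subgroup.map_eq_bot_iff _).mp hKtriv
    have hJ' : J ≤ π.ker := le_trans hJK hK'
    calc grank J ≤ grank (J.map fstH) := grank_le_map_fst J hJ'
      _ ≤ (Module.finrank ℤ (sm (J.map fstH)) : ℕ∞) := grank_le_finrank_sm _
      _ ≤ (Module.finrank ℤ (sm (K.map fstH)) : ℕ∞) := by
          exact_mod_cast Nat.cast_le.mpr
            (Submodule.finrank_mono (sm_mono (Subgroup.map_mono hJK)))
      _ ≤ grank (K.map fstH) := finrank_sm_le _
      _ ≤ grank K := grank_map_le _ _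
  · -- K has nontrivial projection
    haveI : IsFreeGroup ↥(K.map π) := inferInstance
    have hne : Nonempty (IsFreeGroup.Generators ↥(K.map π)) := by
      by_contra hempty
      haveI : IsEmpty (IsFreeGroup.Generators ↥(K.map π)) := not_nonempty_iff.mp hempty
      have hid : (MonoidHom.id ↥(K.map π)) = 1 :=
        IsFreeGroup.ext_hom (fun a => (IsEmpty.false a).elim)
      apply hKtriv
      rw [eq_bot_iff]
      intro x hx
      have h1 : (⟨x, hx⟩ : ↥(K.map π)) = 1 := by
        have := DFunLike.congr_fun hid (⟨x, hx⟩ : ↥(K.map π))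
        simpa using this
      have := congrArg Subtype.val h1
      simpa using this
    obtain ⟨i0⟩ := hne
    set θ := π.subgroupMap K with hθdef
    have hθsurj : Function.Surjective θ := π.subgroupMap_surjective K
    let s : IsFreeGroup.Generators ↥(K.map π) → ↥K :=
      fun i => (hθsurj (IsFreeGroup.of i)).choose
    have hs : ∀ i, θ (s i) = IsFreeGroup.of i := fun i => (hθsurj (IsFreeGroup.of i)).choose_spec
    set σ := IsFreeGroup.lift s with hσdef
    have hθσ : ∀ w, θ (σ w) = w := by
      have : θ.comp σ = MonoidHom.id _ := by
        apply IsFreeGroup.ext_hom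
        intro a
        rw [MonoidHom.comp_apply, hσdef, IsFreeGroup.lift_of, hs, MonoidHom.id_apply]
      intro w
      exact DFunLike.congr_fun this w
    have hπσ : ∀ w : ↥(K.map π), π ↑(σ w : ↥K) = ↑w := by
      intro w
      have := congrArg Subtype.val (hθσ w)
      exact this
    set χ : ↥(K.map π) →* Multiplicative ℤ :=
      IsFreeGroup.lift (fun _ => Multiplicative.ofAdd (1 : ℤ)) with hχdef
    have hχ : ∀ c : ℤ, χ ((IsFreeGroup.of i0) ^ c) = Multiplicative.ofAdd c := by
      intro c
      rw [map_zpow, hχdef, IsFreeGroup.lift_of, ← ofAdd_zsmul, smul_eq_mul, mul_one]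
    -- the homomorphism ψ
    let f1 : ↥K →* Multiplicative (Fin m → ℤ) :=
      (fstH.comp K.subtype) * ((fstH.comp (K.subtype.comp (σ.comp θ)))⁻¹)
    let f2 : ↥K →* Multiplicative ℤ := χ.comp θ
    let ψ : ↥K →* Multiplicative ((Fin m → ℤ) × ℤ) :=
      (MulEquiv.prodMultiplicative (Fin m → ℤ) ℤ).symm.toMonoidHom.comp (f1.prod f2)
    set W := sm ((⊤ : Subgroup ↥K).map ψ) with hWdef
    set Q := sm ((K ⊓ π.ker).map fstH) with hQdef
    have hQW : Q.prod (⊤ : Submodule ℤ ℤ) ≤ W := by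
      rintro ⟨q, c⟩ hy
      have hq : q ∈ Q := hy.1
      obtain ⟨g0, hg0, hfst⟩ := Subgroup.mem_map.mp (mem_sm.mp hq)
      have hg0K : g0 ∈ K := hg0.1
      have hg0ker : π g0 = 1 := hg0.2
      set w : ↥(K.map π) := (IsFreeGroup.of i0) ^ c with hwdef
      set x : ↥K := ⟨g0 * ↑(σ w : ↥K), mul_mem hg0K (σ w : ↥K).2⟩ with hxdef
      have hθx : θ x = w := by
        apply Subtype.ext
        show π (g0 * ↑(σ w : ↥K)) = ↑w
        rw [map_mul, hg0ker, one_mul, hπσ]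
      have hf1 : f1 x = Multiplicative.ofAdd q := by
        show fstH ↑x * (fstH ↑(σ (θ x) : ↥K))⁻¹ = Multiplicative.ofAdd q
        rw [hθx]
        show (g0 * ↑(σ w : ↥K)).1 * ((σ w : ↥K) : Multiplicative (Fin m → ℤ) × FreeGroup (Fin n)).1⁻¹
          = Multiplicative.ofAdd q
        rw [Prod.fst_mul, mul_inv_cancel_right]
        exact hfst
      have hf2 : f2 x = Multiplicative.ofAdd c := by
        show χ (θ x) = Multiplicative.ofAdd c
        rw [hθx, hwdef, hχ]
      apply mem_sm.mpr
      refine Subgroup.mem_map.mpr ⟨x, Subgroup.mem_top x, ?_⟩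
      show (MulEquiv.prodMultiplicative (Fin m → ℤ) ℤ).symm (f1 x, f2 x)
        = Multiplicative.ofAdd (q, c)
      rw [hf1, hf2]
      rfl
    have stepA : grank J ≤ (Module.finrank ℤ Q : ℕ∞) + 1 := by
      have s1 : grank J ≤ grank (J ⊓ π.ker) + 1 :=
        grank_le_inf_ker_add_one J π x0 hx0J hgen
      have s2 : grank (J ⊓ π.ker) ≤ (Module.finrank ℤ Q : ℕ∞) := by
        calc grank (J ⊓ π.ker) ≤ grank ((J ⊓ π.ker).map fstH) :=
              grank_le_map_fst _ inf_le_right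
          _ ≤ (Module.finrank ℤ (sm ((J ⊓ π.ker).map fstH)) : ℕ∞) := grank_le_finrank_sm _
          _ ≤ (Module.finrank ℤ Q : ℕ∞) := by
              exact_mod_cast Nat.cast_le.mpr (Submodule.finrank_mono
                (sm_mono (Subgroup.map_mono (inf_le_inf_right _ hJK))))
      exact le_trans s1 (add_le_add_left s2 1)
    have stepB : (Module.finrank ℤ Q : ℕ∞) + 1 ≤ grank K := by
      calc (Module.finrank ℤ Q : ℕ∞) + 1
          = (Module.finrank ℤ (Q.prod (⊤ : Submodule ℤ ℤ)) : ℕ∞) := by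
            rw [finrank_prod_top]; push_cast; ring
        _ ≤ (Module.finrank ℤ W : ℕ∞) :=
            Nat.cast_le.mpr (Submodule.finrank_mono hQW)
        _ ≤ grank ((⊤ : Subgroup ↥K).map ψ) := finrank_sm_le _
        _ ≤ grank (⊤ : Subgroup ↥K) := grank_map_le _ _
        _ ≤ grank K := grank_top_le K
    exact le_trans stepA stepB

end Main

end InertAux

lemma erat_le_one {a b : ℕ∞} (h : a ≤ b) : erat a b ≤ 1 := by
  rw [erat]
  split_ifs with hc
  · exact le_rfl
  · by_cases hb : b = 0
    · have ha : a = 0 := le_antisymm (hb ▸ h) zero_le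
      exact absurd ⟨ha, hb⟩ hc
    · apply ENNReal.div_le_of_le_mul
      rw [one_mul]
      exact_mod_cast h

lemma erat_self_eq_one {a : ℕ∞} (ha : a ≠ ⊤) : erat a a = 1 := by
  rw [erat]
  split_ifs with hc
  · rfl
  · have ha0 : a ≠ 0 := fun h => hc ⟨h, h⟩
    apply ENNReal.div_self
    · exact_mod_cast ha0
    · exact fun h => ha (ENat.toENNReal_strictMono.injective (by rw [h, ENat.toENNReal_top]))

theorem inert_of_proj_rank_le_one {m n : ℕ}
    (H : Subgroup (Multiplicative (Fin m → ℤ) × FreeGroup (Fin n))) (hH : H.FG)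
    (h1 : grank (H.map (MonoidHom.snd (Multiplicative (Fin m → ℤ)) (FreeGroup (Fin n)))) ≤ 1) :
    (∀ K : Subgroup (Multiplicative (Fin m → ℤ) × FreeGroup (Fin n)),
      grank (H ⊓ K) ≤ grank K) ∧ di H = 1 := by
  have hu : ∃ u : FreeGroup (Fin n),
      H.map (MonoidHom.snd (Multiplicative (Fin m → ℤ)) (FreeGroup (Fin n)))
        ≤ Subgroup.closure {u} := by
    obtain ⟨S, hS, hcard⟩ := InertAux.exists_grank
      (H.map (MonoidHom.snd (Multiplicative (Fin m → ℤ)) (FreeGroup (Fin n))))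
    have hcard1 : S.encard ≤ 1 := by rw [hcard]; exact h1
    rcases Set.encard_le_one_iff_eq.mp hcard1 with rfl | ⟨u, rfl⟩
    · refine ⟨1, ?_⟩
      rw [← hS, Subgroup.closure_empty]
      exact bot_le
    · exact ⟨u, le_of_eq hS.symm⟩
  obtain ⟨u, hu⟩ := hu
  have key : ∀ K : Subgroup (Multiplicative (Fin m → ℤ) × FreeGroup (Fin n)),
      grank (H ⊓ K) ≤ grank K := fun K =>
    InertAux.main_ineq (H ⊓ K) K inf_le_right u
      (le_trans (Subgroup.map_mono inf_le_left) hu)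
  refine ⟨key, ?_⟩
  have hHfin : grank H ≠ ⊤ := by
    obtain ⟨Sf, hSf⟩ := hH
    have hle := InertAux.grank_le hSf
    have hlt : (↑Sf : Set (Multiplicative (Fin m → ℤ) × FreeGroup (Fin n))).encard < ⊤ := Set.encard_lt_top_iff.mpr Sf.finite_toSet
    exact ne_top_of_le_ne_top hlt.ne hle
  apply le_antisymm
  · apply iSup_le; intro K; apply iSup_le; intro _
    exact erat_le_one (tsub_le_tsub_right (key K) 1)
  · have h2 : (1 : ENNReal) ≤ erat (rrank (H ⊓ H)) (rrank H) := by
      rw [inf_idem]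
      rw [erat_self_eq_one (a := rrank H) (ne_top_of_le_ne_top hHfin tsub_le_self)]
    refine le_trans h2 ?_
    refine le_iSup_of_le H ?_
    exact le_iSup_of_le ⟨hH, by rwa [inf_idem]⟩ le_rfl
end
end

section
/- Let G = ℤ^m × F_n with m ≥ 1, n ≥ 2, and let H ≤ G be a finitely generated subgroup with r(Hπ) ≥ 2 and [ℤ^m : H ∩ ℤ^m] = ∞. Then di_G(H) = ∞: for every N there exists a finitely generated subgroup K_N ≤ G of rank 3 such that H ∩ K_N is finitely generated of reduced rank at least N. -/
noncomputable section

lemma grank_le_encard {G : Type*} [Group G] (S : Set G) :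
    grank (Subgroup.closure S) ≤ S.encard := by
  unfold grank
  exact iInf_le_of_le S (iInf_le_of_le rfl le_rfl)

lemma le_grank {G : Type*} [Group G] {c : ℕ∞} {W : Subgroup G}
    (h : ∀ S : Set G, Subgroup.closure S = W → c ≤ S.encard) : c ≤ grank W :=
  le_iInf₂ h

lemma grank_map_le {G G' : Type*} [Group G] [Group G'] (f : G →* G') (W : Subgroup G) :
    grank (W.map f) ≤ grank W := by
  refine le_grank fun S hS => ?_
  calc grank (W.map f) = grank (Subgroup.closure (f '' S)) := by rw [← f.map_closure, hS]
    _ ≤ (f '' S).encard := grank_le_encard _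
    _ ≤ S.encard := Set.encard_image_le _ _

lemma grank_map_eq {G G' : Type*} [Group G] [Group G'] {f : G →* G'}
    (hf : Function.Injective f) (W : Subgroup G) : grank (W.map f) = grank W := by
  refine le_antisymm (grank_map_le f W) (le_grank fun T hT => ?_)
  have hTr : T ⊆ Set.range f := by
    intro x hx
    have hx1 : x ∈ W.map f := hT ▸ Subgroup.subset_closure hx
    obtain ⟨y, _, rfl⟩ := hx1
    exact ⟨y, rfl⟩
  have hcl : Subgroup.closure (f ⁻¹' T) = W := by
    apply Subgroup.map_injective hf
    rw [f.map_closure, Set.image_preimage_eq_inter_range,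
      Set.inter_eq_self_of_subset_left hTr, hT]
  calc grank W = grank (Subgroup.closure (f ⁻¹' T)) := by rw [hcl]
    _ ≤ (f ⁻¹' T).encard := grank_le_encard _
    _ ≤ T.encard := by
        rw [← Set.InjOn.encard_image hf.injOn]
        refine Set.encard_mono ?_
        rw [Set.image_preimage_eq_inter_range]
        exact Set.inter_subset_left

lemma card_le_encard_of_closure_eq_top {ι : Type*} [Fintype ι]
    {T : Set (Multiplicative (ι → ZMod 2))} (hT : Subgroup.closure T = ⊤) :
    (Fintype.card ι : ℕ∞) ≤ T.encard := by
  rcases T.finite_or_infinite with hf | hinf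
  · classical
    set s : Set (ι → ZMod 2) := Multiplicative.toAdd '' T with hs
    have hsf : s.Finite := hf.image _
    have hspan : Submodule.span (ZMod 2) s = ⊤ := by
      rw [Submodule.eq_top_iff']
      intro v
      have hv : (Multiplicative.ofAdd v) ∈ Subgroup.closure T := hT ▸ Subgroup.mem_top _
      have key : ∀ x ∈ Subgroup.closure T,
          Multiplicative.toAdd x ∈ Submodule.span (ZMod 2) s := by
        intro x hx
        induction hx using Subgroup.closure_induction with
        | mem y hy => exact Submodule.subset_span (Set.mem_image_of_mem _ hy)
        | one => simpa using Submodule.zero_mem _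
        | mul y z _ _ hy hz => simpa using Submodule.add_mem _ hy hz
        | inv y _ hy => simpa using Submodule.neg_mem _ hy
      simpa using key _ hv
    haveI : Fintype ↑s := hsf.fintype
    have h1 : Fintype.card ι ≤ s.toFinset.card := by
      have h2 := finrank_span_le_card (R := ZMod 2) s
      rw [hspan, finrank_top, Module.finrank_fintype_fun_eq_card] at h2
      exact h2
    have h3 : T.encard = s.encard := by
      rw [hs, Set.InjOn.encard_image (Multiplicative.toAdd.injective.injOn)]
    rw [h3, Set.encard_eq_coe_toFinset_card]
    exact_mod_cast h1
  · rw [hinf.encard_eq]; exact le_top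

lemma card_le_grank_top {ι : Type*} [Fintype ι] :
    (Fintype.card ι : ℕ∞) ≤ grank (⊤ : Subgroup (Multiplicative (ι → ZMod 2))) :=
  le_grank fun _ hT => card_le_encard_of_closure_eq_top hT

lemma closure_singles {ι : Type*} [Fintype ι] [DecidableEq ι] :
    Subgroup.closure
      (Set.range fun i : ι => Multiplicative.ofAdd (Pi.single i (1 : ZMod 2))) = ⊤ := by
  rw [eq_top_iff]
  intro g _
  have hg : g = ∏ i : ι, Multiplicative.ofAdd (Pi.single i (Multiplicative.toAdd g i)) := by
    rw [← ofAdd_sum, Finset.univ_sum_single]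
    rfl
  rw [hg]
  refine Subgroup.prod_mem _ fun i _ => ?_
  have h01 : ∀ c : ZMod 2, c = 0 ∨ c = 1 := by decide
  rcases h01 (Multiplicative.toAdd g i) with h | h
  · rw [h, Pi.single_zero, ofAdd_zero]
    exact Subgroup.one_mem _
  · rw [h]
    exact Subgroup.subset_closure ⟨i, rfl⟩
lemma range_of_fin2 :
    (Set.range (FreeGroup.of : Fin 2 → FreeGroup (Fin 2))) = {FreeGroup.of 0, FreeGroup.of 1} := by
  ext x
  constructor
  · rintro ⟨i, rfl⟩
    fin_cases i
    · exact Or.inl rfl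
    · exact Or.inr rfl
  · rintro (rfl | rfl)
    · exact ⟨0, rfl⟩
    · exact ⟨1, rfl⟩

lemma fg_freeGroup_fin2 : Group.FG (FreeGroup (Fin 2)) := by
  rw [Group.fg_def, Subgroup.fg_iff]
  exact ⟨Set.range FreeGroup.of, FreeGroup.closure_range_of _, Set.finite_range _⟩

lemma freeGroup_map_injective {α β : Type*} [Nonempty α] {f : α → β}
    (hf : Function.Injective f) :
    Function.Injective (FreeGroup.map f : FreeGroup α →* FreeGroup β) := by
  intro x y h
  have hcomp : Function.invFun f ∘ f = id := funext (Function.leftInverse_invFun hf)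
  have h2 := congrArg (FreeGroup.map (Function.invFun f)) h
  rwa [FreeGroup.map.comp, FreeGroup.map.comp, hcomp, FreeGroup.map.id, FreeGroup.map.id] at h2

lemma subgroup_fg_map {G G' : Type*} [Group G] [Group G'] {W : Subgroup G}
    (h : W.FG) (f : G →* G') : (W.map f).FG := by
  rcases (Subgroup.fg_iff W).1 h with ⟨S, hS, hfin⟩
  exact (Subgroup.fg_iff _).2 ⟨f '' S, by rw [← f.map_closure, hS], hfin.image _⟩

def shiftMulAut (M : ℕ) (g : ZMod M) : MulAut (Multiplicative (ZMod M → ZMod 2)) where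
  toFun x := Multiplicative.ofAdd fun i => Multiplicative.toAdd x (i + g)
  invFun x := Multiplicative.ofAdd fun i => Multiplicative.toAdd x (i - g)
  left_inv x := by
    simp only [toAdd_ofAdd]
    conv_rhs => rw [← ofAdd_toAdd x]
    congr 1
    funext i
    rw [sub_add_cancel]
  right_inv x := by
    simp only [toAdd_ofAdd]
    conv_rhs => rw [← ofAdd_toAdd x]
    congr 1
    funext i
    rw [add_sub_cancel_right]
  map_mul' x y := rfl

def shiftHom (M : ℕ) :
    Multiplicative (ZMod M) →* MulAut (Multiplicative (ZMod M → ZMod 2)) :=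
  MonoidHom.mk' (fun g => shiftMulAut M (Multiplicative.toAdd g)) (by
    intro a b
    apply MulEquiv.ext
    intro x
    have key : ∀ (g : ZMod M) (y : Multiplicative (ZMod M → ZMod 2)) (i : ZMod M),
        Multiplicative.toAdd ((shiftMulAut M g) y) i = Multiplicative.toAdd y (i + g) :=
      fun _ _ _ => rfl
    have h2 : Multiplicative.toAdd ((shiftMulAut M (Multiplicative.toAdd (a * b))) x)
        = Multiplicative.toAdd (((shiftMulAut M (Multiplicative.toAdd a))
            * (shiftMulAut M (Multiplicative.toAdd b))) x) := by
      funext i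
      rw [MulAut.mul_apply, key, key, key, toAdd_mul, ← add_assoc]
    exact Multiplicative.toAdd.injective h2)

lemma grank_ker_ge (M : ℕ) [NeZero M] :
    (M : ℕ∞) ≤ grank ((FreeGroup.lift
      ![Multiplicative.ofAdd (1 : ZMod M), (1 : Multiplicative (ZMod M))]).ker) := by
  classical
  set ρM := FreeGroup.lift ![Multiplicative.ofAdd (1 : ZMod M), (1 : Multiplicative (ZMod M))]
    with hρM
  set W := ρM.ker with hW
  set ρ : FreeGroup (Fin 2) →* SemidirectProduct (Multiplicative (ZMod M → ZMod 2))
      (Multiplicative (ZMod M)) (shiftHom M) :=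
    FreeGroup.lift ![SemidirectProduct.inr (Multiplicative.ofAdd (1 : ZMod M)),
      SemidirectProduct.inl (Multiplicative.ofAdd (Pi.single 0 1))] with hρ
  have hrham : SemidirectProduct.rightHom.comp ρ = ρM := by
    apply FreeGroup.ext_hom
    intro a
    fin_cases a <;> simp [hρ, hρM]
  have hsub : W.map ρ ≤ SemidirectProduct.inl.range := by
    rintro _ ⟨w, hw, rfl⟩
    rw [SemidirectProduct.range_inl_eq_ker_rightHom, MonoidHom.mem_ker]
    have := DFunLike.congr_fun hrham w
    rw [MonoidHom.comp_apply] at this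
    rw [this]
    exact hw
  have hsingle : ∀ c : ZMod M,
      SemidirectProduct.inl (Multiplicative.ofAdd (Pi.single c (1 : ZMod 2))) ∈ W.map ρ := by
    intro c
    obtain ⟨z, hz⟩ : ∃ z : ℤ, ((z : ℤ) : ZMod M) = -c :=
      ⟨-(c.val : ℤ), by push_cast [ZMod.natCast_val, ZMod.cast_id]; ring⟩
    have ha : ∀ z' : ℤ, (Multiplicative.ofAdd (1 : ZMod M)) ^ z'
        = Multiplicative.ofAdd ((z' : ZMod M)) := by
      intro z'
      rw [← ofAdd_zsmul]
      congr 1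
      rw [zsmul_eq_mul, mul_one]
    refine Subgroup.mem_map.2
      ⟨(FreeGroup.of 0) ^ z * FreeGroup.of 1 * (FreeGroup.of 0) ^ (-z), ?_, ?_⟩
    · rw [hW, MonoidHom.mem_ker, map_mul, map_mul, map_zpow, map_zpow]
      simp only [hρM, FreeGroup.lift_apply_of, Matrix.cons_val_zero, Matrix.cons_val_one,
        Matrix.head_cons]
      rw [zpow_neg, mul_one, mul_inv_cancel]
    · rw [map_mul, map_mul, map_zpow, map_zpow]
      simp only [hρ, FreeGroup.lift_apply_of, Matrix.cons_val_zero, Matrix.cons_val_one,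
        Matrix.head_cons]
      rw [← map_zpow SemidirectProduct.inr (Multiplicative.ofAdd (1 : ZMod M)) z, ha z,
        zpow_neg, ← map_zpow SemidirectProduct.inr (Multiplicative.ofAdd (1 : ZMod M)) z, ha z,
        ← map_inv, ← SemidirectProduct.inl_aut]
      congr 1
      apply Multiplicative.toAdd.injective
      funext i
      have key : ∀ (g : Multiplicative (ZMod M)) (y : Multiplicative (ZMod M → ZMod 2))
          (i : ZMod M), Multiplicative.toAdd (((shiftHom M) g) y) i
            = Multiplicative.toAdd y (i + Multiplicative.toAdd g) := fun _ _ _ => rfl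
      rw [key, toAdd_ofAdd, toAdd_ofAdd, toAdd_ofAdd, Pi.single_apply, Pi.single_apply]
      congr 1
      rw [eq_iff_iff]
      constructor
      · intro h0
        have : i = -(z : ZMod M) := by linear_combination h0
        rw [this, hz, neg_neg]
      · intro h0
        rw [h0, hz]
        ring
  have hP0 : (W.map ρ).comap SemidirectProduct.inl = ⊤ := by
    rw [eq_top_iff, ← closure_singles (ι := ZMod M), Subgroup.closure_le]
    rintro _ ⟨c, rfl⟩
    exact hsingle c
  have hPeq : W.map ρ = Subgroup.map SemidirectProduct.inl ⊤ := by
    conv_lhs => rw [← inf_eq_right.2 hsub, ← Subgroup.map_comap_eq, hP0]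
  have h2 : (Fintype.card (ZMod M) : ℕ∞) ≤ grank (W.map ρ) := by
    rw [hPeq, grank_map_eq SemidirectProduct.inl_injective]
    exact card_le_grank_top
  rw [ZMod.card] at h2
  exact h2.trans (grank_map_le ρ W)

lemma ker_fg (M : ℕ) [NeZero M] :
    ((FreeGroup.lift
      ![Multiplicative.ofAdd (1 : ZMod M), (1 : Multiplicative (ZMod M))]).ker).FG := by
  haveI : Group.FG (FreeGroup (Fin 2)) := fg_freeGroup_fin2
  set ρM := FreeGroup.lift ![Multiplicative.ofAdd (1 : ZMod M), (1 : Multiplicative (ZMod M))]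
  haveI : ρM.ker.FiniteIndex := by
    constructor
    rw [Subgroup.index_ker]
    exact Nat.card_pos.ne'
  exact (Group.fg_iff_subgroup_fg _).1 (Subgroup.fg_of_index_ne_zero _)
lemma exists_functional {m : ℕ} (C : Subgroup (Multiplicative (Fin m → ℤ)))
    (hC : C.index = 0) :
    ∃ F : (Fin m → ℤ) →+ ℤ,
      (∀ a : Fin m → ℤ, Multiplicative.ofAdd a ∈ C → F a = 0) ∧ ∃ b, F b = 1 := by
  classical
  haveI hQinf : Infinite (Multiplicative (Fin m → ℤ) ⧸ C) :=
    Subgroup.index_eq_zero_iff_infinite.1 hC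
  haveI : Group.FG (Multiplicative (Fin m → ℤ)) :=
    AddGroup.fg_iff_mul_fg.1 (Module.Finite.iff_addGroup_fg.1 inferInstance)
  haveI : Group.FG (Multiplicative (Fin m → ℤ) ⧸ C) :=
    Group.fg_of_surjective (QuotientGroup.mk'_surjective C)
  set Q := Additive (Multiplicative (Fin m → ℤ) ⧸ C) with hQdef
  haveI : AddGroup.FG Q := GroupFG.iff_add_fg.1 ‹_›
  haveI : Infinite Q := hQinf
  obtain ⟨k, ι, hι, p, hp, e, ⟨eq⟩⟩ := AddCommGroup.equiv_free_prod_directSum_zmod Q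
  rcases Nat.eq_zero_or_pos k with hk | hk
  · exfalso
    subst hk
    haveI : Fintype ι := hι
    haveI : ∀ i, NeZero (p i ^ e i) := fun i => ⟨pow_ne_zero _ (hp i).ne_zero⟩
    haveI : ∀ i, Fintype (ZMod (p i ^ e i)) := fun i => inferInstance
    haveI : DecidableEq ι := Classical.decEq ι
    haveI : Finite (DirectSum ι fun i => ZMod (p i ^ e i)) :=
      @Finite.of_fintype (DirectSum ι fun i => ZMod (p i ^ e i)) DFinsupp.fintype
    haveI : Finite ((Fin 0 →₀ ℤ) × DirectSum ι fun i => ZMod (p i ^ e i)) := by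
      infer_instance
    haveI : Finite Q := Finite.of_equiv _ eq.toEquiv.symm
    exact not_finite Q
  · set i0 : Fin k := ⟨0, hk⟩
    set F0 : Q →+ ℤ :=
      (Finsupp.applyAddHom i0).comp ((AddMonoidHom.fst _ _).comp eq.toAddMonoidHom) with hF0
    have hsurj : ∃ q : Q, F0 q = 1 := by
      obtain ⟨q, hq⟩ := eq.surjective (Finsupp.single i0 1, 0)
      exact ⟨q, by simp [hF0, hq]⟩
    obtain ⟨q, hq⟩ := hsurj
    obtain ⟨x, hx⟩ := QuotientGroup.mk'_surjective C (Additive.toMul q)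
    refine ⟨AddMonoidHom.mk' (fun a =>
      F0 (Additive.ofMul ((QuotientGroup.mk' C) (Multiplicative.ofAdd a)))) ?_, ?_, ?_⟩
    · intro a b
      rw [ofAdd_add, map_mul]
      show F0 (Additive.ofMul (_ * _)) = _
      rw [show ∀ u v : Multiplicative (Fin m → ℤ) ⧸ C,
          Additive.ofMul (u * v) = Additive.ofMul u + Additive.ofMul v from fun _ _ => rfl,
        map_add]
    · intro a ha
      show F0 (Additive.ofMul ((QuotientGroup.mk' C) (Multiplicative.ofAdd a))) = 0
      have h1 : (QuotientGroup.mk' C) (Multiplicative.ofAdd a) = 1 :=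
        (QuotientGroup.eq_one_iff _).2 ha
      rw [h1]
      show F0 0 = 0
      exact map_zero F0
    · refine ⟨Multiplicative.toAdd x, ?_⟩
      show F0 (Additive.ofMul ((QuotientGroup.mk' C) (Multiplicative.ofAdd (Multiplicative.toAdd x)))) = 1
      rw [ofAdd_toAdd, hx]
      show F0 q = 1
      exact hq
lemma exists_free_pair {n : ℕ} (P : Subgroup (FreeGroup (Fin n))) (h2 : 2 ≤ grank P) :
    ∃ u₁ u₂ : FreeGroup (Fin n), u₁ ∈ P ∧ u₂ ∈ P ∧
      Function.Injective (FreeGroup.lift ![u₁, u₂]) := by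
  classical
  haveI : IsFreeGroup ↥P := inferInstance
  set Gen := IsFreeGroup.Generators ↥P with hGen
  set E : ↥P ≃* FreeGroup Gen := IsFreeGroup.toFreeGroup ↥P with hE
  set f : FreeGroup Gen →* FreeGroup (Fin n) := P.subtype.comp E.symm.toMonoidHom with hf
  have hfinj : Function.Injective f := P.subtype_injective.comp E.symm.injective
  have hrange : ∀ y, f y ∈ P := fun y => (E.symm y).2
  by_cases hs : Nontrivial Gen
  · obtain ⟨i, j, hij⟩ := hs
    refine ⟨f (FreeGroup.of i), f (FreeGroup.of j), hrange _, hrange _, ?_⟩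
    have hpick : Function.Injective (![i, j] : Fin 2 → Gen) := by
      intro a b hab
      fin_cases a <;> fin_cases b <;> simp_all
    have hcomp : FreeGroup.lift ![f (FreeGroup.of i), f (FreeGroup.of j)] =
        f.comp (FreeGroup.map ![i, j]) := by
      apply FreeGroup.ext_hom
      intro a
      fin_cases a <;> simp
    rw [hcomp, MonoidHom.coe_comp]
    exact Function.Injective.comp hfinj (freeGroup_map_injective hpick)
  · exfalso
    haveI : Subsingleton Gen := not_nontrivial_iff_subsingleton.1 hs
    have hmap : Subgroup.map f ⊤ = P := by
      rw [← MonoidHom.range_eq_map]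
      apply le_antisymm
      · rintro _ ⟨y, rfl⟩
        exact hrange y
      · intro x hx
        refine ⟨E ⟨x, hx⟩, ?_⟩
        rw [hf]
        simp
    have hP : P = Subgroup.closure (f '' Set.range FreeGroup.of) := by
      rw [← f.map_closure, FreeGroup.closure_range_of, hmap]
    have hsub : (Set.range (FreeGroup.of : Gen → FreeGroup Gen)).Subsingleton := by
      rintro x ⟨ix, rfl⟩ y ⟨iy, rfl⟩
      rw [Subsingleton.elim ix iy]
    have hle : grank P ≤ 1 := by
      rw [hP]
      refine (grank_le_encard _).trans ?_
      refine (Set.encard_image_le _ _).trans ?_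
      exact Set.encard_le_one_iff.2 fun a b ha hb => hsub ha hb
    have hbad := h2.trans hle
    norm_num at hbad
lemma main_construction {m n : ℕ}
    (H : Subgroup (Multiplicative (Fin m → ℤ) × FreeGroup (Fin n)))
    (F : (Fin m → ℤ) →+ ℤ)
    (hF0 : ∀ a : Fin m → ℤ,
      (MonoidHom.inl (Multiplicative (Fin m → ℤ)) (FreeGroup (Fin n)))
        (Multiplicative.ofAdd a) ∈ H → F a = 0)
    (b : Fin m → ℤ) (hFb : F b = 1)
    (h₁ h₂ : Multiplicative (Fin m → ℤ) × FreeGroup (Fin n))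
    (h₁H : h₁ ∈ H) (h₂H : h₂ ∈ H)
    (hinj : Function.Injective (FreeGroup.lift ![h₁.2, h₂.2]))
    (M : ℕ) (hM : M ≠ 0) :
    ∃ K, K.FG ∧ grank K = 3 ∧ (H ⊓ K).FG ∧ (M : ℕ∞) ≤ grank (H ⊓ K) := by
  classical
  haveI : NeZero M := ⟨hM⟩
  set inlA := MonoidHom.inl (Multiplicative (Fin m → ℤ)) (FreeGroup (Fin n)) with hinlA
  set π := MonoidHom.snd (Multiplicative (Fin m → ℤ)) (FreeGroup (Fin n)) with hπdef
  set tb := inlA (Multiplicative.ofAdd b) with htbdef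
  have htbc : ∀ g, Commute tb g := by
    intro g
    show tb * g = g * tb
    apply Prod.ext
    · exact mul_comm _ _
    · show 1 * g.2 = g.2 * 1
      rw [one_mul, mul_one]
  have htbz : ∀ j : ℤ, tb ^ j = inlA (Multiplicative.ofAdd (j • b)) := by
    intro j
    rw [htbdef, ← map_zpow, ← ofAdd_zsmul]
  have htbH : ∀ j : ℤ, tb ^ j ∈ H → j = 0 := by
    intro j hj
    rw [htbz] at hj
    have h0 := hF0 (j • b) hj
    rw [map_zsmul, hFb, smul_eq_mul, mul_one] at h0
    exact h0
  set σZ := FreeGroup.lift ![Multiplicative.ofAdd (1 : ℤ), (1 : Multiplicative ℤ)] with hσZ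
  set ρM := FreeGroup.lift
    ![Multiplicative.ofAdd (1 : ZMod M), (1 : Multiplicative (ZMod M))] with hρM
  have hcast : (AddMonoidHom.toMultiplicative (Int.castAddHom (ZMod M))).comp σZ = ρM := by
    apply FreeGroup.ext_hom
    intro a
    fin_cases a <;> simp [hσZ, hρM]
  have hdvd : ∀ w, w ∈ ρM.ker ↔ (M : ℤ) ∣ Multiplicative.toAdd (σZ w) := by
    intro w
    rw [MonoidHom.mem_ker, ← hcast, MonoidHom.comp_apply]
    have hx : ∀ x : Multiplicative ℤ,
        (AddMonoidHom.toMultiplicative (Int.castAddHom (ZMod M))) x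
          = Multiplicative.ofAdd ((Multiplicative.toAdd x : ℤ) : ZMod M) := fun _ => rfl
    rw [hx, show (1 : Multiplicative (ZMod M)) = Multiplicative.ofAdd 0 from rfl,
      Multiplicative.ofAdd.injective.eq_iff]
    exact ZMod.intCast_zmod_eq_zero_iff_dvd _ _
  set ψH := FreeGroup.lift ![h₁, h₂] with hψHdef
  set ψπ := FreeGroup.lift ![h₁.2, h₂.2] with hψπdef
  have hπψHc : π.comp ψH = ψπ := by
    apply FreeGroup.ext_hom
    intro a
    fin_cases a <;> simp [hψHdef, hψπdef, hπdef]
  have hπψH : ∀ w, (ψH w).2 = ψπ w := fun w => DFunLike.congr_fun hπψHc w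
  have hψH_mem : ∀ w, ψH w ∈ H := by
    have hr : ψH.range ≤ H := by
      rw [MonoidHom.range_eq_map, ← FreeGroup.closure_range_of (Fin 2), ψH.map_closure,
        Subgroup.closure_le]
      rintro _ ⟨_, ⟨a, rfl⟩, rfl⟩
      fin_cases a
      · simpa [hψHdef] using h₁H
      · simpa [hψHdef] using h₂H
    exact fun w => hr ⟨w, rfl⟩
  have hψH_inj : Function.Injective ψH := by
    rw [injective_iff_map_eq_one]
    intro w hw
    refine (injective_iff_map_eq_one ψπ).1 hinj w ?_
    rw [← hπψH, hw]
    rfl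
  set g₁ := h₁ * tb⁻¹ with hg₁
  set g₂ := h₂ with hg₂
  set g₃ := tb ^ (M : ℤ) with hg₃
  set ψK := FreeGroup.lift ![g₁, g₂] with hψKdef
  have hψKid : ∀ w, ψK w = ψH w * tb ^ (-(Multiplicative.toAdd (σZ w))) := by
    set E : FreeGroup (Fin 2) →* Multiplicative (Fin m → ℤ) × FreeGroup (Fin n) :=
      MonoidHom.mk' (fun w => ψH w * tb ^ (-(Multiplicative.toAdd (σZ w)))) (by
        intro v w
        rw [map_mul, map_mul, toAdd_mul, neg_add, zpow_add]
        have hc := (htbc (ψH w)).zpow_left (-(Multiplicative.toAdd (σZ v)))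
        exact hc.symm.mul_mul_mul_comm _ _) with hE
    have hEK : ψK = E := by
      apply FreeGroup.ext_hom
      intro a
      have hE0 : ∀ w, E w = ψH w * tb ^ (-(Multiplicative.toAdd (σZ w))) := fun _ => rfl
      fin_cases a <;> rw [hE0] <;> simp [hψKdef, hψHdef, hσZ, hg₁, hg₂]
    intro w
    rw [hEK]
    rfl
  have hπψK : ∀ w, (ψK w).2 = ψπ w := by
    intro w
    rw [hψKid w]
    have : (tb ^ (-(Multiplicative.toAdd (σZ w)))).2 = 1 := by
      rw [htbz]
      rfl
    show (ψH w).2 * (tb ^ (-(Multiplicative.toAdd (σZ w)))).2 = ψπ w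
    rw [this, mul_one, hπψH]
  have hcomm : ∀ (w : FreeGroup (Fin 2)) (k : Multiplicative ℤ),
      Commute (ψK w) ((zpowersHom _ g₃) k) := by
    intro w k
    rw [zpowersHom_apply, hg₃]
    exact ((htbc (ψK w)).symm.zpow_right (M : ℤ)).zpow_right (Multiplicative.toAdd k)
  set Θ := ψK.noncommCoprod (zpowersHom _ g₃) hcomm with hΘdef
  have hΘ : ∀ (w : FreeGroup (Fin 2)) (k : Multiplicative ℤ),
      Θ (w, k) = ψK w * g₃ ^ (Multiplicative.toAdd k) := by
    intro w k
    rw [hΘdef, MonoidHom.noncommCoprod_apply, zpowersHom_apply]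
  set K := Subgroup.closure ({g₁, g₂, g₃} :
    Set (Multiplicative (Fin m → ℤ) × FreeGroup (Fin n))) with hKdef
  have hKr : K = Θ.range := by
    apply le_antisymm
    · rw [hKdef, Subgroup.closure_le]
      rintro x (rfl | rfl | rfl)
      · exact ⟨(FreeGroup.of 0, 1), by rw [hΘ]; simp [hψKdef]⟩
      · exact ⟨(FreeGroup.of 1, 1), by rw [hΘ]; simp [hψKdef]; rfl⟩
      · exact ⟨(1, Multiplicative.ofAdd 1), by rw [hΘ]; simp⟩
    · rintro x ⟨⟨w, k⟩, rfl⟩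
      rw [hΘ]
      have h3 : g₃ ∈ K := Subgroup.subset_closure (by right; right; rfl)
      refine mul_mem ?_ (Subgroup.zpow_mem _ h3 _)
      have hw12 : ψK w ∈ Subgroup.closure ({g₁, g₂} :
          Set (Multiplicative (Fin m → ℤ) × FreeGroup (Fin n))) := by
        have hmem : ψK w ∈ Subgroup.map ψK ⊤ := ⟨w, Subgroup.mem_top w, rfl⟩
        rw [← FreeGroup.closure_range_of (Fin 2), ψK.map_closure, range_of_fin2,
          Set.image_pair] at hmem
        simpa [hψKdef] using hmem
      refine Subgroup.closure_mono ?_ hw12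
      intro y hy
      rcases hy with rfl | rfl
      · left; rfl
      · right; left; rfl
  have hΘinj : Function.Injective Θ := by
    rw [injective_iff_map_eq_one]
    rintro ⟨w, k⟩ h1
    rw [hΘ] at h1
    have hw : ψπ w = 1 := by
      have h2 := congrArg Prod.snd h1
      have hg3 : (g₃ ^ (Multiplicative.toAdd k)).2 = 1 := by
        rw [hg₃, ← zpow_mul, htbz]
        rfl
      show _ = _
      calc ψπ w = (ψK w).2 * (g₃ ^ (Multiplicative.toAdd k)).2 := by
            rw [hg3, mul_one, hπψK]
        _ = 1 := h2
    have hw1 : w = 1 := (injective_iff_map_eq_one ψπ).1 hinj w hw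
    subst hw1
    rw [map_one, one_mul] at h1
    have hk0 : (M : ℤ) * Multiplicative.toAdd k = 0 := by
      apply htbH
      rw [hg₃, ← zpow_mul] at h1
      rw [h1]
      exact one_mem H
    have : Multiplicative.toAdd k = 0 := by
      rcases mul_eq_zero.1 hk0 with h | h
      · exact absurd h (by exact_mod_cast hM)
      · exact h
    have hk1 : k = 1 := by
      rw [← ofAdd_toAdd k, this]
      rfl
    rw [hk1]
    rfl
  have hHK : H ⊓ K = Subgroup.map ψH ρM.ker := by
    apply le_antisymm
    · rintro x ⟨hxH, hxK⟩
      rw [hKr] at hxK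
      obtain ⟨⟨w, k⟩, rfl⟩ := hxK
      rw [hΘ] at hxH ⊢
      have hx : ψK w * g₃ ^ (Multiplicative.toAdd k)
          = ψH w * tb ^ ((M : ℤ) * Multiplicative.toAdd k - Multiplicative.toAdd (σZ w)) := by
        rw [hψKid w, hg₃, ← zpow_mul, mul_assoc, ← zpow_add]
        congr 2
        ring
      have hmem : tb ^ ((M : ℤ) * Multiplicative.toAdd k - Multiplicative.toAdd (σZ w)) ∈ H := by
        have h5 : (ψH w)⁻¹ * (ψK w * g₃ ^ (Multiplicative.toAdd k)) ∈ H :=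
          mul_mem (inv_mem (hψH_mem w)) hxH
        rwa [hx, inv_mul_cancel_left] at h5
      have hj := htbH _ hmem
      refine Subgroup.mem_map.2 ⟨w, (hdvd w).2 ⟨Multiplicative.toAdd k, by omega⟩, ?_⟩
      rw [hx, hj, zpow_zero, mul_one]
    · rintro _ ⟨w, hwW, rfl⟩
      obtain ⟨k, hk⟩ := (hdvd w).1 hwW
      constructor
      · exact hψH_mem w
      · rw [hKr]
        refine ⟨(w, Multiplicative.ofAdd k), ?_⟩
        rw [hΘ, toAdd_ofAdd, hψKid w, hg₃, ← zpow_mul, mul_assoc, ← zpow_add]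
        rw [show -(Multiplicative.toAdd (σZ w)) + (M : ℤ) * k = 0 by omega, zpow_zero, mul_one]
  refine ⟨K, ?_, ?_, ?_, ?_⟩
  · rw [hKdef]
    exact (Subgroup.fg_iff _).2 ⟨{g₁, g₂, g₃}, rfl, Set.toFinite _⟩
  · -- grank K = 3
    have hle : grank K ≤ 3 := by
      rw [hKdef]
      refine (grank_le_encard _).trans ?_
      calc ({g₁, g₂, g₃} :
            Set (Multiplicative (Fin m → ℤ) × FreeGroup (Fin n))).encard
          ≤ ({g₂, g₃} : Set _).encard + 1 := Set.encard_insert_le _ _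
        _ ≤ (({g₃} : Set _).encard + 1) + 1 := by
            gcongr
            exact Set.encard_insert_le _ _
        _ = 3 := by rw [Set.encard_singleton]; rfl
    have hge : (3 : ℕ∞) ≤ grank K := by
      have hmapΘ : K = Subgroup.map Θ ⊤ := by rw [hKr, MonoidHom.range_eq_map]
      rw [hmapΘ, grank_map_eq hΘinj]
      set ab := (FreeGroup.lift ![Multiplicative.ofAdd (Pi.single (0 : Fin 3) (1 : ZMod 2)),
          Multiplicative.ofAdd (Pi.single (1 : Fin 3) (1 : ZMod 2))]).coprod
        (zpowersHom (Multiplicative (Fin 3 → ZMod 2))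
          (Multiplicative.ofAdd (Pi.single (2 : Fin 3) (1 : ZMod 2)))) with hab
      have habs : Subgroup.map ab ⊤ = ⊤ := by
        rw [← MonoidHom.range_eq_map, eq_top_iff, ← closure_singles (ι := Fin 3),
          Subgroup.closure_le]
        rintro _ ⟨i, rfl⟩
        fin_cases i
        · exact ⟨(FreeGroup.of 0, 1), by simp [hab, MonoidHom.coprod_apply]⟩
        · exact ⟨(FreeGroup.of 1, 1), by simp [hab, MonoidHom.coprod_apply]⟩
        · exact ⟨(1, Multiplicative.ofAdd 1), by simp [hab, MonoidHom.coprod_apply]⟩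
      calc (3 : ℕ∞) = (Fintype.card (Fin 3) : ℕ∞) := by simp
        _ ≤ grank (⊤ : Subgroup (Multiplicative (Fin 3 → ZMod 2))) := card_le_grank_top
        _ = grank (Subgroup.map ab ⊤) := by rw [habs]
        _ ≤ grank (⊤ : Subgroup (FreeGroup (Fin 2) × Multiplicative ℤ)) := grank_map_le ab ⊤
    exact le_antisymm hle hge
  · rw [hHK]
    exact subgroup_fg_map (ker_fg M) ψH
  · rw [hHK, grank_map_eq hψH_inj]
    exact grank_ker_ge M
theorem di_infinite_of_infinite_index {m n : ℕ} (hm : 1 ≤ m) (hn : 2 ≤ n)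
    (H : Subgroup (Multiplicative (Fin m → ℤ) × FreeGroup (Fin n))) (hH : H.FG)
    (h2 : 2 ≤ grank (H.map (MonoidHom.snd (Multiplicative (Fin m → ℤ)) (FreeGroup (Fin n)))))
    (hinf : (H.comap (MonoidHom.inl (Multiplicative (Fin m → ℤ)) (FreeGroup (Fin n)))).index = 0) :
    di H = ⊤ ∧
    ∀ N : ℕ, ∃ K : Subgroup (Multiplicative (Fin m → ℤ) × FreeGroup (Fin n)),
      K.FG ∧ grank K = 3 ∧ (H ⊓ K).FG ∧ (N : ℕ∞) ≤ rrank (H ⊓ K) := by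
  classical
  obtain ⟨F, hF0, b, hFb⟩ :=
    exists_functional (H.comap (MonoidHom.inl (Multiplicative (Fin m → ℤ)) (FreeGroup (Fin n))))
      hinf
  obtain ⟨u₁, u₂, hu₁, hu₂, huinj⟩ :=
    exists_free_pair (H.map (MonoidHom.snd (Multiplicative (Fin m → ℤ)) (FreeGroup (Fin n)))) h2
  obtain ⟨h₁, h₁H, hπ₁⟩ := Subgroup.mem_map.1 hu₁
  obtain ⟨h₂, h₂H, hπ₂⟩ := Subgroup.mem_map.1 hu₂
  have hinj2 : Function.Injective (FreeGroup.lift ![h₁.2, h₂.2]) := by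
    have e1 : h₁.2 = u₁ := hπ₁
    have e2 : h₂.2 = u₂ := hπ₂
    rw [e1, e2]
    exact huinj
  have key : ∀ M : ℕ, M ≠ 0 →
      ∃ K, K.FG ∧ grank K = 3 ∧ (H ⊓ K).FG ∧ (M : ℕ∞) ≤ grank (H ⊓ K) :=
    fun M hM => main_construction H F (fun a ha => hF0 a (Subgroup.mem_comap.2 ha)) b hFb
      h₁ h₂ h₁H h₂H hinj2 M hM
  have key2 : ∀ N : ℕ, ∃ K, K.FG ∧ grank K = 3 ∧ (H ⊓ K).FG ∧ (N : ℕ∞) ≤ rrank (H ⊓ K) := by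
    intro N
    obtain ⟨K, hfg, h3, hfg2, hgr⟩ := key (N + 1) (Nat.succ_ne_zero N)
    refine ⟨K, hfg, h3, hfg2, ?_⟩
    rw [rrank]
    refine ENat.le_sub_of_add_le_left (by simp) ?_
    calc ((1 : ℕ∞) + N) = ((N + 1 : ℕ) : ℕ∞) := by push_cast; ring
      _ ≤ grank (H ⊓ K) := hgr
  refine ⟨?_, key2⟩
  have hdi : ∀ N : ℕ, (N : ENNReal) ≤ di H := by
    intro N
    obtain ⟨K, hKfg, hK3, hHKfg, hrr⟩ := key2 (2 * N)
    have hrK : rrank K = 2 := by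
      rw [rrank, hK3]
      rfl
    have hle1 : erat (rrank (H ⊓ K)) (rrank K) ≤ di H := by
      have h1 : erat (rrank (H ⊓ K)) (rrank K)
          ≤ ⨆ (_ : K.FG ∧ (H ⊓ K).FG), erat (rrank (H ⊓ K)) (rrank K) :=
        le_iSup (fun _ => erat (rrank (H ⊓ K)) (rrank K)) ⟨hKfg, hHKfg⟩
      exact h1.trans (le_iSup
        (fun K => ⨆ (_ : K.FG ∧ (H ⊓ K).FG), erat (rrank (H ⊓ K)) (rrank K)) K)
    refine le_trans ?_ hle1
    rw [erat, if_neg (by simp [hrK]), hrK]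
    have hb2 : ((2 : ℕ∞) : ENNReal) = 2 := by norm_cast
    rw [hb2, ENNReal.le_div_iff_mul_le (Or.inl two_ne_zero) (Or.inl ENNReal.ofNat_ne_top)]
    calc (N : ENNReal) * 2 = (((2 * N : ℕ) : ℕ∞) : ENNReal) := by push_cast; ring
      _ ≤ ((rrank (H ⊓ K) : ℕ∞) : ENNReal) := by exact_mod_cast hrr
  by_contra hne
  obtain ⟨N, hN⟩ := ENNReal.exists_nat_gt hne
  exact absurd (hdi N) (not_le.2 hN)
end
end

section
/- Let A ∈ M_{r×m}(ℤ), B ∈ M_{s×m}(ℤ), U ∈ M_{r×p}(ℤ), and let B' ∈ M_{s'×m}(ℤ) be such that row(B) is a finite index subgroup of row(B'). Then d(A, B, U) = d(A, B', U), where d(A, B, U) is the minimum rank of a subgroup L ≤ ℤ^m such that row(B) ≤ L and there exists C ∈ M_{p×m}(ℤ) with row(A − UC) ≤ L. -/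
noncomputable section

/-- The subgroup of ℤ^m generated by the rows of an integer matrix. -/
def rowSpan {k m : ℕ} (M : Matrix (Fin k) (Fin m) ℤ) : Submodule ℤ (Fin m → ℤ) :=
  Submodule.span ℤ (Set.range M)

/-- d(A,B,U): the minimum rank of a subgroup L ≤ ℤ^m with row(B) ≤ L and
row(A − UC) ≤ L for some integer matrix C. -/
def dABU {r s p m : ℕ} (A : Matrix (Fin r) (Fin m) ℤ) (B : Matrix (Fin s) (Fin m) ℤ)
    (U : Matrix (Fin r) (Fin p) ℤ) : ℕ :=
  sInf {k : ℕ | ∃ (L : Submodule ℤ (Fin m → ℤ)) (C : Matrix (Fin p) (Fin m) ℤ),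
    rowSpan B ≤ L ∧ rowSpan (A - U * C) ≤ L ∧ Module.finrank ℤ L = k}

theorem dABU_eq_of_finite_index {r s s' p m : ℕ}
    (A : Matrix (Fin r) (Fin m) ℤ) (B : Matrix (Fin s) (Fin m) ℤ)
    (U : Matrix (Fin r) (Fin p) ℤ) (B' : Matrix (Fin s') (Fin m) ℤ)
    (hle : rowSpan B ≤ rowSpan B')
    (hfi : (rowSpan B).toAddSubgroup.relIndex (rowSpan B').toAddSubgroup ≠ 0) :
    dABU A B U = dABU A B' U := by
  set n : ℕ := (rowSpan B).toAddSubgroup.relIndex (rowSpan B').toAddSubgroup with hn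
  -- key: multiplying by n sends rowSpan B' into rowSpan B
  have key : ∀ x ∈ rowSpan B', (n : ℤ) • x ∈ rowSpan B := by
    intro x hx
    haveI : AddSubgroup.FiniteIndex
        (((rowSpan B).toAddSubgroup).addSubgroupOf ((rowSpan B').toAddSubgroup)) := ⟨hfi⟩
    have := AddSubgroup.nsmul_index_mem
      (((rowSpan B).toAddSubgroup).addSubgroupOf ((rowSpan B').toAddSubgroup))
      (⟨x, hx⟩ : (rowSpan B').toAddSubgroup)
    have h2 : (n • (⟨x, hx⟩ : (rowSpan B').toAddSubgroup) : Fin m → ℤ) ∈ rowSpan B := this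
    simpa [natCast_zsmul] using h2
  apply le_antisymm
  · -- the feasible set for B' is contained in the feasible set for B
    have hne' : {k : ℕ | ∃ (L : Submodule ℤ (Fin m → ℤ)) (C : Matrix (Fin p) (Fin m) ℤ),
        rowSpan B' ≤ L ∧ rowSpan (A - U * C) ≤ L ∧ Module.finrank ℤ L = k}.Nonempty :=
      ⟨Module.finrank ℤ (⊤ : Submodule ℤ (Fin m → ℤ)), ⊤, 0, le_top, le_top, rfl⟩
    obtain ⟨L, C, hB', hA, hk⟩ := Nat.sInf_mem hne'
    exact Nat.sInf_le ⟨L, C, hle.trans hB', hA, hk⟩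
  · -- take an optimal L for B, and enlarge it to L ⊔ rowSpan B'
    have hne : {k : ℕ | ∃ (L : Submodule ℤ (Fin m → ℤ)) (C : Matrix (Fin p) (Fin m) ℤ),
        rowSpan B ≤ L ∧ rowSpan (A - U * C) ≤ L ∧ Module.finrank ℤ L = k}.Nonempty :=
      ⟨Module.finrank ℤ (⊤ : Submodule ℤ (Fin m → ℤ)), ⊤, 0, le_top, le_top, rfl⟩
    obtain ⟨L, C, hB, hA, hk⟩ := Nat.sInf_mem hne
    set L' : Submodule ℤ (Fin m → ℤ) := L ⊔ rowSpan B' with hL'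
    have hsmul : ∀ x ∈ L', (n : ℤ) • x ∈ L := by
      intro x hx
      obtain ⟨y, hy, z, hz, rfl⟩ := Submodule.mem_sup.mp hx
      rw [smul_add]
      exact L.add_mem (L.smul_mem _ hy) (hB (key z hz))
    -- finrank L' ≤ finrank L via the injective map x ↦ n • x
    have hninj : (n : ℤ) ≠ 0 := by exact_mod_cast hfi
    let f : L' →ₗ[ℤ] L :=
      LinearMap.codRestrict L (((n : ℤ) • LinearMap.id).comp L'.subtype)
        (fun x => hsmul x x.2)
    have hfinj : Function.Injective f := by
      intro a b hab
      have h1 : (n : ℤ) • (a : Fin m → ℤ) = (n : ℤ) • (b : Fin m → ℤ) := by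
        have := congrArg (Subtype.val) hab
        simpa [f] using this
      exact Subtype.ext (smul_right_injective _ hninj h1)
    have hrank : Module.finrank ℤ L' ≤ Module.finrank ℤ L :=
      LinearMap.finrank_le_finrank_of_injective hfinj
    calc dABU A B' U ≤ Module.finrank ℤ L' :=
          Nat.sInf_le ⟨L', C, le_sup_right, hA.trans le_sup_left, rfl⟩
      _ ≤ Module.finrank ℤ L := hrank
      _ = dABU A B U := hk
end
end
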